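/- Let q ≡ 3 (mod 8) be a prime power and c ∈ F_{q^2} with (c/2)^{(q+1)/4} = 1. Let u = (q+5)/4, let k be an even integer, and set h(x) = c + x^{u+k} + x^{qu+k+2}. Then f(x) = x^r h(x^{q-1}) is a permutation polynomial of F_{q^2} if and only if gcd(r, (q^2-1)/4) = 1 and gcd(r-k-1, (q+1)/4) = 1. -/

import Mathlib

noncomputable section PP
variable {F : Type*} [Field F]



variable {F : Type*} [Field F]

lemma sq1 {a : F} (h : a ^ 2 = 1) : a = 1 ∨ a = -1 := by
  have h' : (a - 1) * (a + 1) = 0 := by linear_combination h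
  rcases mul_eq_zero.mp h' with h'' | h''
  · exact Or.inl (by linear_combination h'')
  · exact Or.inr (by linear_combination h'')

lemma H3 {t : F} (ht : t ≠ 0) {a b M : ℕ} (hab : t ^ a = t ^ b)
    (hM : t ^ M = 1) (hg : Int.gcd ((a : ℤ) - b) M = 1) : t = 1 := by
  have h1 : t ^ ((a : ℤ) - b) = 1 := by
    rw [zpow_sub₀ ht, zpow_natCast, zpow_natCast, hab, div_self (pow_ne_zero _ (by simpa [hab] using ht))]
  have h2 : t ^ ((M : ℕ) : ℤ) = 1 := by rw [zpow_natCast, hM]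
  obtain ⟨α, β, h⟩ := Int.isCoprime_iff_gcd_eq_one.mpr hg
  have : t = t ^ (α * ((a : ℤ) - b) + β * (M : ℤ)) := by rw [h, zpow_one]
  rw [this, zpow_add₀ ht, mul_comm α, mul_comm β, zpow_mul, zpow_mul, h1, h2,
    one_zpow, one_zpow, one_mul]

lemma eq_of_cross {y1 y2 : F} (hy1 : y1 ≠ 0) (hy2 : y2 ≠ 0) {a b M : ℕ}
    (h : y1 ^ a * y2 ^ b = y2 ^ a * y1 ^ b) (hMeq : y1 ^ M = y2 ^ M)
    (hg : Int.gcd ((a : ℤ) - b) M = 1) : y1 = y2 := by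
  have ht : y1 / y2 ≠ 0 := div_ne_zero hy1 hy2
  have hta : (y1 / y2) ^ a = (y1 / y2) ^ b := by
    rw [div_pow, div_pow, div_eq_div_iff (pow_ne_zero _ hy2) (pow_ne_zero _ hy2)]
    linear_combination h
  have htM : (y1 / y2) ^ M = 1 := by rw [div_pow, hMeq, div_self (pow_ne_zero _ hy2)]
  have := H3 ht hta htM hg
  field_simp at this
  exact this



lemma tri {s : ℕ} {y : F} (hy : y ^ (4*(2*s+1)) = 1) :
    y ^ (2*s+1) = 1 ∨ y ^ (2*s+1) = -1 ∨ y ^ (2*(2*s+1)) = -1 := by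
  have h2 : (y ^ (2*(2*s+1))) ^ 2 = 1 := by
    rw [← pow_mul, show 2*(2*s+1)*2 = 4*(2*s+1) by ring]; exact hy
  rcases sq1 h2 with h | h
  · have h1 : (y ^ (2*s+1)) ^ 2 = 1 := by
      rw [← pow_mul, show (2*s+1)*2 = 2*(2*s+1) by ring]; exact h
    rcases sq1 h1 with h' | h'
    · exact Or.inl h'
    · exact Or.inr (Or.inl h')
  · exact Or.inr (Or.inr h)

def hval (c : F) (s k : ℕ) (y : F) : F :=
  c + y ^ (2*s+2 + k) + y ^ ((8*s+3) * (2*s+2) + k + 2)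

variable {c w : F} {s k : ℕ}

lemma valA {y : F} (hy4 : y ^ (4*(2*s+1)) = 1) (hy : y ^ (2*s+1) = 1) :
    hval c s k y = c + 2 * y ^ (k+1) := by
  unfold hval
  have e1 : y ^ (2*s+2+k) = y ^ (k+1) * y ^ (2*s+1) := by
    rw [← pow_add]; congr 1; ring
  have e2 : y ^ ((8*s+3) * (2*s+2) + k + 2) * y ^ (2*s+1)
      = y ^ (k+1) * (y ^ (4*(2*s+1))) ^ (2*s+2) := by
    rw [← pow_mul, ← pow_add, ← pow_add]; congr 1; ring
  rw [hy4, one_pow, mul_one, hy, mul_one] at e2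
  rw [e1, e2, hy, mul_one]; ring

lemma valB {y : F} (hy4 : y ^ (4*(2*s+1)) = 1) (hy : y ^ (2*s+1) = -1) :
    hval c s k y = c - 2 * y ^ (k+1) := by
  unfold hval
  have e1 : y ^ (2*s+2+k) = y ^ (k+1) * y ^ (2*s+1) := by
    rw [← pow_add]; congr 1; ring
  have e2 : y ^ ((8*s+3) * (2*s+2) + k + 2) * y ^ (2*s+1)
      = y ^ (k+1) * (y ^ (4*(2*s+1))) ^ (2*s+2) := by
    rw [← pow_mul, ← pow_add, ← pow_add]; congr 1; ring
  rw [hy4, one_pow, mul_one, hy] at e2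
  have e3 : y ^ ((8*s+3) * (2*s+2) + k + 2) = - y ^ (k+1) := by linear_combination -e2
  rw [e1, e3, hy]; ring

lemma valC {y : F} (hy4 : y ^ (4*(2*s+1)) = 1) (hy : y ^ (2*(2*s+1)) = -1) :
    hval c s k y = c := by
  unfold hval
  have e1 : y ^ (2*s+2+k) = y ^ (k+1) * y ^ (2*s+1) := by
    rw [← pow_add]; congr 1; ring
  have e2 : y ^ ((8*s+3) * (2*s+2) + k + 2) * y ^ (2*(2*s+1))
      = y ^ (k+1) * y ^ (2*s+1) * (y ^ (4*(2*s+1))) ^ (2*s+2) := by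
    rw [← pow_mul, ← pow_add, ← pow_add, ← pow_add]; congr 1; ring
  rw [hy4, one_pow, mul_one, hy] at e2
  have e3 : y ^ ((8*s+3) * (2*s+2) + k + 2) = - (y ^ (k+1) * y ^ (2*s+1)) := by
    linear_combination -e2
  rw [e1, e3]; ring

lemma h_ne (hcw : c = 2 * w) (hw : w ^ (2*s+1) = 1) (hw0 : w ≠ 0)
    (two_ne : (2 : F) ≠ 0) (hk : Even k) {y : F} (hy4 : y ^ (4*(2*s+1)) = 1) :
    hval c s k y ≠ 0 := by
  have neg1 : (-1 : F) ≠ 1 := by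
    intro h; apply two_ne; linear_combination - h
  have hodd : Odd (2*s+1) := ⟨s, by ring⟩
  have hkodd : Odd (k+1) := hk.add_one
  have h2 : (y ^ (2*(2*s+1))) ^ 2 = 1 := by
    rw [← pow_mul, show 2*(2*s+1)*2 = 4*(2*s+1) by ring]; exact hy4
  rcases sq1 h2 with h | h
  · have h1 : (y ^ (2*s+1)) ^ 2 = 1 := by
      rw [← pow_mul, show (2*s+1)*2 = 2*(2*s+1) by ring]; exact h
    rcases sq1 h1 with h' | h'
    · rw [valA (k := k) hy4 h', hcw]
      intro h0
      have hyw : y ^ (k+1) = -w := by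
        have := mul_eq_zero.mp (show (2:F) * (w + y^(k+1)) = 0 by linear_combination h0)
        rcases this with h'' | h''
        · exact absurd h'' two_ne
        · linear_combination h''
      have e1 : (y ^ (k+1)) ^ (2*s+1) = 1 := by
        rw [pow_right_comm, h', one_pow]
      rw [hyw, hodd.neg_pow, hw] at e1
      exact neg1 e1
    · rw [valB (k := k) hy4 h', hcw]
      intro h0
      have hyw : y ^ (k+1) = w := by
        have := mul_eq_zero.mp (show (2:F) * (w - y^(k+1)) = 0 by linear_combination h0)
        rcases this with h'' | h''
        · exact absurd h'' two_ne
        · linear_combination -h''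
      have e1 : (y ^ (k+1)) ^ (2*s+1) = (-1) ^ (k+1) := by
        rw [pow_right_comm, h']
      rw [hyw, hw, hkodd.neg_one_pow] at e1
      exact neg1 e1.symm
  · rw [valC (k := k) hy4 h, hcw]
    exact mul_ne_zero two_ne hw0

lemma relA (hcw : c = 2*w) (hwq : w ^ (8*s+3) * w = 1)
    (frob : ∀ a b : F, (a+b) ^ (8*s+3) = a ^ (8*s+3) + b ^ (8*s+3))
    (htwo : (2:F) ^ (8*s+3) = 2)
    {y : F} (hyq : y ^ (8*s+3) * y = 1) (hv : hval c s k y = c + 2 * y ^ (k+1)) :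
    (hval c s k y) ^ (8*s+3) * (w * y ^ (k+1)) = hval c s k y := by
  rw [hv, hcw]
  have hpow : (2*w + 2*y^(k+1)) ^ (8*s+3)
      = 2 * w ^ (8*s+3) + 2 * (y ^ (8*s+3)) ^ (k+1) := by
    rw [frob, mul_pow, mul_pow, htwo, pow_right_comm]
  rw [hpow]
  have h2 : (y ^ (8*s+3)) ^ (k+1) * y ^ (k+1) = 1 := by
    rw [← mul_pow, hyq, one_pow]
  linear_combination (2*y^(k+1)) * hwq + (2*w) * h2

lemma relB (hcw : c = 2*w) (hwq : w ^ (8*s+3) * w = 1)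
    (frob : ∀ a b : F, (a+b) ^ (8*s+3) = a ^ (8*s+3) + b ^ (8*s+3))
    (htwo : (2:F) ^ (8*s+3) = 2)
    {y : F} (hyq : y ^ (8*s+3) * y = 1) (hv : hval c s k y = c - 2 * y ^ (k+1)) :
    (hval c s k y) ^ (8*s+3) * (w * y ^ (k+1)) = - hval c s k y := by
  rw [hv, hcw]
  have hodd : Odd (8*s+3) := ⟨4*s+1, by ring⟩
  have hpow : (2*w - 2*y^(k+1)) ^ (8*s+3)
      = 2 * w ^ (8*s+3) - 2 * (y ^ (8*s+3)) ^ (k+1) := by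
    rw [sub_eq_add_neg, frob, hodd.neg_pow, mul_pow, mul_pow, htwo, pow_right_comm]
    ring
  rw [hpow]
  have h2 : (y ^ (8*s+3)) ^ (k+1) * y ^ (k+1) = 1 := by
    rw [← mul_pow, hyq, one_pow]
  linear_combination (2*y^(k+1)) * hwq + (-2*w) * h2

lemma relC (hcw : c = 2*w) (hwq : w ^ (8*s+3) * w = 1)
    (htwo : (2:F) ^ (8*s+3) = 2)
    {y : F} (hv : hval c s k y = c) :
    (hval c s k y) ^ (8*s+3) * (w * w) = hval c s k y := by
  rw [hv, hcw, mul_pow, htwo]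
  linear_combination (2*w) * hwq

lemma key {c : F} {s k r : ℕ}
    (hinj : Function.Injective (fun x : F => x ^ r * hval c s k (x ^ (8*s+2))))
    (hr8 : Nat.gcd r (8*s+2) = 1) {x1 x2 : F}
    (hf1 : x1 ^ r * hval c s k (x1 ^ (8*s+2)) ≠ 0)
    (hf2 : x2 ^ r * hval c s k (x2 ^ (8*s+2)) ≠ 0)
    (H : (x2 ^ r * hval c s k (x2 ^ (8*s+2))) ^ (8*s+3) * (x1 ^ r * hval c s k (x1 ^ (8*s+2)))
       = (x1 ^ r * hval c s k (x1 ^ (8*s+2))) ^ (8*s+3) * (x2 ^ r * hval c s k (x2 ^ (8*s+2)))) :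
    x2 ^ (8*s+2) = x1 ^ (8*s+2) := by
  set f1 := x1 ^ r * hval c s k (x1 ^ (8*s+2)) with hf1d
  set f2 := x2 ^ r * hval c s k (x2 ^ (8*s+2)) with hf2d
  set A := f2 / f1 with hA
  have hA0 : A ≠ 0 := div_ne_zero hf2 hf1
  have hAq : A ^ (8*s+3) = A := by
    rw [hA, div_pow, div_eq_div_iff (pow_ne_zero _ hf1) hf1]
    linear_combination H
  have hA1 : A ^ (8*s+2) = 1 := by
    have h := pow_sub₀ A hA0 (show 1 ≤ 8*s+3 by omega)
    rw [show 8*s+3-1 = 8*s+2 by omega] at h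
    rw [h, hAq, pow_one, mul_inv_cancel₀ hA0]
  have hgZ : Int.gcd (r : ℤ) ((8*s+2 : ℕ) : ℤ) = 1 := by
    rw [Int.gcd_natCast_natCast]; exact hr8
  obtain ⟨a, b, hab⟩ := Int.isCoprime_iff_gcd_eq_one.mpr hgZ
  set lam := A ^ (a : ℤ) with hlam
  have hlam8 : lam ^ (8*s+2) = 1 := by
    rw [hlam, ← zpow_natCast (A ^ a) (8*s+2), ← zpow_mul, mul_comm, zpow_mul,
      zpow_natCast, hA1, one_zpow]
  have hlamr : lam ^ r = A := by
    rw [hlam, ← zpow_natCast (A ^ a) r, ← zpow_mul]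
    have e : a * (r : ℤ) = 1 - ((8*s+2 : ℕ) : ℤ) * b := by linear_combination hab
    rw [e, zpow_sub₀ hA0, zpow_one, zpow_mul, zpow_natCast, hA1, one_zpow, div_one]
  have happ : (fun x : F => x ^ r * hval c s k (x ^ (8*s+2))) (lam * x1)
      = (fun x : F => x ^ r * hval c s k (x ^ (8*s+2))) x2 := by
    simp only
    rw [mul_pow, mul_pow, hlam8, one_mul, hlamr, mul_assoc, ← hf1d, hA,
      div_mul_cancel₀ f2 hf1]
  have hx := hinj happ
  rw [← hx, mul_pow, hlam8, one_mul]
end PP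

section Main
variable {F : Type*} [Field F] [Fintype F]

theorem main (p n s : ℕ) (hp : p.Prime)
    (hpn : p ^ n = 8*s+3) (hn : 0 < n)
    (hF : Fintype.card F = (8*s+3)^2)
    (c : F) (hc : (c/2) ^ (2*s+1) = 1) (k : ℕ) (hk : Even k) (r : ℕ) :
    Function.Bijective (fun x : F => x ^ r * hval c s k (x ^ (8*s+2))) ↔
      (Nat.gcd r ((8*s+2)*(2*s+1)) = 1 ∧
        Int.gcd ((r : ℤ) - k - 1) ((2*s+1 : ℕ) : ℤ) = 1) := by
  classical
  haveI : Fact p.Prime := ⟨hp⟩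
  have hp2 : p ≠ 2 := by
    rintro rfl
    have h2 : 2 ∣ 2 ^ n := dvd_pow_self 2 hn.ne'
    rw [hpn] at h2; omega
  haveI hchar : CharP F p := by
    haveI := ringChar.charP F
    obtain ⟨n', hp', hcard'⟩ := FiniteField.card F (ringChar F)
    have hcard2 : Fintype.card F = p ^ (2*n) := by rw [hF, ← hpn]; ring
    have hdvd : ringChar F ∣ p ^ (2*n) := by
      rw [← hcard2, hcard']
      exact dvd_pow_self _ (by positivity : (0:ℕ) < (n' : ℕ)).ne'
    have : ringChar F = p := (Nat.prime_dvd_prime_iff_eq hp' hp).mp (hp'.dvd_of_dvd_pow hdvd)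
    rw [← this]; exact ringChar.charP F
  have frob : ∀ a b : F, (a + b) ^ (8*s+3) = a ^ (8*s+3) + b ^ (8*s+3) := by
    intro a b; rw [← hpn]; exact add_pow_char_pow a b p n
  have htwo : (2 : F) ^ (8*s+3) = 2 := by
    have h := frob 1 1; norm_num at h; convert h using 2
  have two_ne : (2 : F) ≠ 0 := by
    intro h
    have h' : ((2 : ℕ) : F) = 0 := by push_cast; exact h
    have := (CharP.cast_eq_zero_iff F p 2).mp h'
    exact hp2 ((Nat.prime_dvd_prime_iff_eq hp Nat.prime_two).mp this)
  have neg1 : (-1 : F) ≠ 1 := fun h => two_ne (by linear_combination -h)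
  set w := c / 2 with hwdef
  have hw : w ^ (2*s+1) = 1 := hc
  have hw0 : w ≠ 0 := by
    intro h; rw [h, zero_pow (by omega : 2*s+1 ≠ 0)] at hw; exact zero_ne_one hw
  have hcw : c = 2 * w := by rw [hwdef]; field_simp
  have hwq : w ^ (8*s+3) * w = 1 := by
    have e : w ^ (8*s+3) * w = (w ^ (2*s+1)) ^ 4 := by
      rw [← pow_succ, ← pow_mul]; congr 1; ring
    rw [e, hw, one_pow]
  have hFne : ∀ x : F, x ≠ 0 → x ^ (64*s^2+48*s+8) = 1 := by
    intro x hx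
    have h := FiniteField.pow_card_sub_one_eq_one x hx
    rw [hF] at h
    have e : (8*s+3)^2 - 1 = 64*s^2+48*s+8 := by
      have : (8*s+3)^2 = 64*s^2+48*s+9 := by ring
      omega
    rwa [e] at h
  have hy4all : ∀ x : F, x ≠ 0 → (x ^ (8*s+2)) ^ (4*(2*s+1)) = 1 := by
    intro x hx
    rw [← pow_mul, show (8*s+2)*(4*(2*s+1)) = 64*s^2+48*s+8 by ring]
    exact hFne x hx
  have hyq_of : ∀ {y : F}, y ^ (4*(2*s+1)) = 1 → y ^ (8*s+3) * y = 1 := by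
    intro y h; rw [← pow_succ, show 8*s+3+1 = 4*(2*s+1) by ring]; exact h
  have hmodd : Odd (2*s+1) := ⟨s, by ring⟩
  have hkodd : Odd (k+1) := hk.add_one
  constructor
  · intro hbij
    have hinj := hbij.injective
    obtain ⟨ζ, hζ⟩ := IsCyclic.exists_generator (α := Fˣ)
    have horder : orderOf ζ = 64*s^2+48*s+8 := by
      rw [orderOf_eq_card_of_forall_mem_zpowers hζ, Nat.card_eq_fintype_card,
        Fintype.card_units, hF]
      have e : (8*s+3)^2 = 64*s^2+48*s+9 := by ring
      omega
    set ξ := ((ζ : Fˣ) : F) with hxi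
    have hξ0 : ξ ≠ 0 := Units.ne_zero ζ
    have hξpow : ∀ j : ℕ, ξ ^ j = 1 ↔ (64*s^2+48*s+8) ∣ j := by
      intro j
      rw [hxi, ← Units.val_pow_eq_pow_val]
      constructor
      · intro hu
        have h1 : ζ ^ j = 1 := Units.ext (by rw [hu]; rfl)
        rw [← horder]
        exact orderOf_dvd_of_pow_eq_one h1
      · rintro ⟨e, rfl⟩
        rw [pow_mul, ← horder, pow_orderOf_eq_one, one_pow, Units.val_one]
    have hxine : ∀ j : ℕ, 0 < j → j < 64*s^2+48*s+8 → ξ ^ j ≠ 1 := by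
      intro j hj0 hjlt hj1
      have := Nat.le_of_dvd hj0 ((hξpow j).mp hj1)
      exact absurd this (not_le.mpr hjlt)
    have hhalf : ξ ^ (32*s^2+24*s+4) = -1 := by
      have hsq : (ξ ^ (32*s^2+24*s+4)) ^ 2 = 1 := by
        rw [← pow_mul]; exact (hξpow _).mpr ⟨1, by ring⟩
      rcases sq1 hsq with h | h
      · exfalso
        refine hxine _ (by positivity) ?_ h
        have h0 : 0 < 32*s^2+24*s+4 := by positivity
        obtain ⟨C, hC⟩ : ∃ C, 32*s^2+24*s+4 = C := ⟨_, rfl⟩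
        have e1 : 64*s^2+48*s+8 = (32*s^2+24*s+4)*2 := by ring
        rw [hC] at h0
        rw [e1, hC]
        omega
      · exact h
    have part1 : Nat.gcd r (8*s+2) = 1 := by
      by_contra hne
      set d := Nat.gcd r (8*s+2) with hdd
      have hd8 : d ∣ 8*s+2 := Nat.gcd_dvd_right _ _
      have hdr : d ∣ r := Nat.gcd_dvd_left _ _
      have hdpos : 0 < d := Nat.gcd_pos_of_pos_right _ (by omega)
      have hd2 : 2 ≤ d := by omega
      obtain ⟨e8, he8⟩ := hd8
      obtain ⟨g, hg⟩ := hdr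
      have he8pos : 0 < e8 := by
        rcases Nat.eq_zero_or_pos e8 with h0 | h
        · rw [h0, Nat.mul_zero] at he8; omega
        · exact h
      set T := ξ ^ (e8 * (8*s+4)) with hT
      have hTq : T ^ (8*s+2) = 1 := by
        rw [hT, ← pow_mul]
        exact (hξpow _).mpr ⟨e8, by ring⟩
      have hTr : T ^ r = 1 := by
        rw [hT, ← pow_mul]
        refine (hξpow _).mpr ⟨g, ?_⟩
        rw [hg]
        have e1 : 64*s^2+48*s+8 = (8*s+2)*(8*s+4) := by ring
        rw [e1, he8]; ring
      have hTne : T ≠ 1 := by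
        rw [hT]; apply hxine
        · exact Nat.mul_pos he8pos (by omega)
        · have h1 : e8*(8*s+4)*2 ≤ e8*(8*s+4)*d :=
            Nat.mul_le_mul_left _ hd2
          have h2 : e8*(8*s+4)*d = 64*s^2+48*s+8 := by
            have e1 : 64*s^2+48*s+8 = (8*s+2)*(8*s+4) := by ring
            rw [e1, he8]; ring
          have hfin : e8*(8*s+4)*2 ≤ 64*s^2+48*s+8 := by rw [← h2]; exact h1
          have h3 : 0 < e8*(8*s+4) := Nat.mul_pos he8pos (by omega)
          obtain ⟨A, hA⟩ : ∃ A, e8*(8*s+4) = A := ⟨_, rfl⟩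
          obtain ⟨B, hB⟩ : ∃ B, 64*s^2+48*s+8 = B := ⟨_, rfl⟩
          rw [hA, hB] at hfin
          rw [hA] at h3
          rw [hA, hB]
          omega
      have happ : T ^ r * hval c s k (T ^ (8*s+2)) = (1:F) ^ r * hval c s k ((1:F) ^ (8*s+2)) := by
        rw [hTq, hTr]; simp
      exact hTne (hinj happ)
    have part2 : Nat.gcd r (2*s+1) = 1 := by
      by_contra hne
      set d := Nat.gcd r (2*s+1) with hdd
      have hdm : d ∣ 2*s+1 := Nat.gcd_dvd_right _ _
      have hdr : d ∣ r := Nat.gcd_dvd_left _ _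
      have hdpos : 0 < d := Nat.gcd_pos_of_pos_right _ (by omega)
      have hd2 : 2 ≤ d := by omega
      obtain ⟨e, he⟩ := hdm
      obtain ⟨g, hg⟩ := hdr
      have hepos : 0 < e := by
        rcases Nat.eq_zero_or_pos e with h0 | h
        · rw [h0, Nat.mul_zero] at he; omega
        · exact h
      set x1 := ξ ^ (2*s+1) with hx1d
      set τ := ξ ^ (4*e) with hτd
      set x2 := x1 * τ with hx2d
      set t := ξ ^ (4*e*(8*s+2)) with htd
      have hτt : τ ^ (8*s+2) = t := by rw [hτd, htd, ← pow_mul]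
      have hx10 : x1 ≠ 0 := pow_ne_zero _ hξ0
      have hτ0 : τ ≠ 0 := pow_ne_zero _ hξ0
      have hx20 : x2 ≠ 0 := mul_ne_zero hx10 hτ0
      have htm : t ^ (2*s+1) = 1 := by
        rw [htd, ← pow_mul]; exact (hξpow _).mpr ⟨e, by ring⟩
      have htd1 : t ^ d = 1 := by
        rw [htd, ← pow_mul]
        refine (hξpow _).mpr ⟨1, ?_⟩
        have e1 : 64*s^2+48*s+8 = 4*(2*s+1)*(8*s+2) := by ring
        rw [e1, he]; ring
      have htr : t ^ r = 1 := by
        rw [hg, pow_mul, htd1, one_pow]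
      have htne : t ≠ 1 := by
        rw [htd]; apply hxine
        · exact Nat.mul_pos (Nat.mul_pos (by omega) hepos) (by omega)
        · have h1 : 4*e*(8*s+2)*2 ≤ 4*e*(8*s+2)*d :=
            Nat.mul_le_mul_left _ hd2
          have h2 : 4*e*(8*s+2)*d = 64*s^2+48*s+8 := by
            have e1 : 64*s^2+48*s+8 = 4*(2*s+1)*(8*s+2) := by ring
            rw [e1, he]; ring
          have hfin : 4*e*(8*s+2)*2 ≤ 64*s^2+48*s+8 := by rw [← h2]; exact h1
          have h3 : 0 < 4*e*(8*s+2) := Nat.mul_pos (Nat.mul_pos (by omega) hepos) (by omega)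
          obtain ⟨A, hA⟩ : ∃ A, 4*e*(8*s+2) = A := ⟨_, rfl⟩
          obtain ⟨B, hB⟩ : ∃ B, 64*s^2+48*s+8 = B := ⟨_, rfl⟩
          rw [hA, hB] at hfin
          rw [hA] at h3
          rw [hA, hB]
          omega
      have hy1C : (x1 ^ (8*s+2)) ^ (2*(2*s+1)) = -1 := by
        rw [hx1d, ← pow_mul, ← pow_mul]
        have e1 : (2*s+1)*((8*s+2)*(2*(2*s+1))) = (32*s^2+24*s+4)*(2*s+1) := by ring
        rw [e1, pow_mul, hhalf, hmodd.neg_one_pow]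
      have hx2p : x2 ^ (8*s+2) = x1 ^ (8*s+2) * t := by
        rw [hx2d, mul_pow, hτt]
      have hy2C : (x2 ^ (8*s+2)) ^ (2*(2*s+1)) = -1 := by
        rw [hx2p, mul_pow, hy1C, show 2*(2*s+1) = (2*s+1)*2 by ring, pow_mul, htm,
          one_pow, mul_one]
      have hy14 : (x1 ^ (8*s+2)) ^ (4*(2*s+1)) = 1 := hy4all x1 hx10
      have hy24 : (x2 ^ (8*s+2)) ^ (4*(2*s+1)) = 1 := hy4all x2 hx20
      have hv1 : hval c s k (x1 ^ (8*s+2)) = c := valC (k := k) hy14 hy1C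
      have hv2 : hval c s k (x2 ^ (8*s+2)) = c := valC (k := k) hy24 hy2C
      have hc0 : c ≠ 0 := by rw [hcw]; exact mul_ne_zero two_ne hw0
      have hf1 : x1 ^ r * hval c s k (x1 ^ (8*s+2)) ≠ 0 :=
        mul_ne_zero (pow_ne_zero _ hx10) (by rw [hv1]; exact hc0)
      have hf2 : x2 ^ r * hval c s k (x2 ^ (8*s+2)) ≠ 0 :=
        mul_ne_zero (pow_ne_zero _ hx20) (by rw [hv2]; exact hc0)
      have hτr3 : (τ ^ r) ^ (8*s+3) = τ ^ r := by
        rw [show 8*s+3 = (8*s+2)+1 from by ring, pow_succ, pow_right_comm, hτt, htr,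
          one_mul]
      have H : (x2 ^ r * hval c s k (x2 ^ (8*s+2))) ^ (8*s+3) * (x1 ^ r * hval c s k (x1 ^ (8*s+2)))
             = (x1 ^ r * hval c s k (x1 ^ (8*s+2))) ^ (8*s+3) * (x2 ^ r * hval c s k (x2 ^ (8*s+2))) := by
        rw [hv1, hv2, hx2d]
        simp only [mul_pow]
        rw [hτr3]; ring
      have hkey := key hinj part1 hf1 hf2 H
      rw [hx2p] at hkey
      have hteq : t = 1 := by
        have h1e : x1 ^ (8*s+2) * t = x1 ^ (8*s+2) * 1 := by rw [mul_one]; exact hkey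
        exact mul_left_cancel₀ (pow_ne_zero _ hx10) h1e
      exact htne hteq
    have part3 : Int.gcd ((r:ℤ) - k - 1) ((2*s+1 : ℕ) : ℤ) = 1 := by
      by_contra hne
      set D := Int.gcd ((r:ℤ) - k - 1) ((2*s+1 : ℕ) : ℤ) with hD
      have hdm : D ∣ 2*s+1 := by
        have h := Int.gcd_dvd_right (a := (r:ℤ) - k - 1) (b := ((2*s+1 : ℕ) : ℤ))
        rw [← hD] at h
        exact_mod_cast h
      have hDpos : 0 < D := by
        rcases Nat.eq_zero_or_pos D with h0 | h
        · exfalso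
          rw [hD] at h0
          have h2' := (Int.gcd_eq_zero_iff.mp h0).2
          have : (2*s+1 : ℕ) = 0 := by exact_mod_cast h2'
          omega
        · exact h
      have hD2 : 2 ≤ D := by omega
      obtain ⟨e, he⟩ := hdm
      have hepos : 0 < e := by
        rcases Nat.eq_zero_or_pos e with h0 | h
        · rw [h0, Nat.mul_zero] at he; omega
        · exact h
      set τ := ξ ^ (4*e) with hτd
      set t := ξ ^ (4*e*(8*s+2)) with htd
      have hτt : τ ^ (8*s+2) = t := by rw [hτd, htd, ← pow_mul]
      have hτ0 : τ ≠ 0 := pow_ne_zero _ hξ0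
      have ht0 : t ≠ 0 := pow_ne_zero _ hξ0
      have htm : t ^ (2*s+1) = 1 := by
        rw [htd, ← pow_mul]; exact (hξpow _).mpr ⟨e, by ring⟩
      have htD : t ^ D = 1 := by
        rw [htd, ← pow_mul]
        refine (hξpow _).mpr ⟨1, ?_⟩
        have e1 : 64*s^2+48*s+8 = 4*(2*s+1)*(8*s+2) := by ring
        rw [e1, he]; ring
      have htne : t ≠ 1 := by
        rw [htd]; apply hxine
        · exact Nat.mul_pos (Nat.mul_pos (by omega) hepos) (by omega)
        · have h1 : 4*e*(8*s+2)*2 ≤ 4*e*(8*s+2)*D := Nat.mul_le_mul_left _ hD2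
          have h2 : 4*e*(8*s+2)*D = 64*s^2+48*s+8 := by
            have e1 : 64*s^2+48*s+8 = 4*(2*s+1)*(8*s+2) := by ring
            rw [e1, he]; ring
          have hfin : 4*e*(8*s+2)*2 ≤ 64*s^2+48*s+8 := by rw [← h2]; exact h1
          have h3 : 0 < 4*e*(8*s+2) := Nat.mul_pos (Nat.mul_pos (by omega) hepos) (by omega)
          obtain ⟨A, hA⟩ : ∃ A, 4*e*(8*s+2) = A := ⟨_, rfl⟩
          obtain ⟨B, hB⟩ : ∃ B, 64*s^2+48*s+8 = B := ⟨_, rfl⟩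
          rw [hA, hB] at hfin
          rw [hA] at h3
          rw [hA, hB]
          omega
      obtain ⟨g, hg⟩ := Int.gcd_dvd_left (a := (r:ℤ) - k - 1) (b := ((2*s+1 : ℕ) : ℤ))
      rw [← hD] at hg
      have htrz : t ^ ((r:ℤ) - ((k:ℤ)+1)) = 1 := by
        have e1 : (r:ℤ) - ((k:ℤ)+1) = (D:ℤ) * g := by linear_combination hg
        rw [e1, zpow_mul, zpow_natCast, htD, one_zpow]
      have htr : t ^ r = t ^ (k+1) := by
        rw [zpow_sub₀ ht0] at htrz
        have e3 := div_eq_one_iff_eq (by exact zpow_ne_zero _ ht0) |>.mp htrz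
        rw [zpow_natCast] at e3
        rw [show ((k:ℤ)+1) = ((k+1 : ℕ) : ℤ) by push_cast; ring, zpow_natCast] at e3
        exact e3
      have hy24 : (τ ^ (8*s+2)) ^ (4*(2*s+1)) = 1 := hy4all τ hτ0
      have ht4 : t ^ (4*(2*s+1)) = 1 := by rw [← hτt]; exact hy24
      have e2 := relA (k := k) hcw hwq frob htwo (hyq_of ht4) (valA (k := k) ht4 htm)
      have h14 : (1:F) ^ (4*(2*s+1)) = 1 := one_pow _
      have e1 := relA (k := k) hcw hwq frob htwo (hyq_of h14) (valA (k := k) h14 (one_pow _))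
      rw [one_pow, mul_one] at e1
      have h1ne : hval c s k (1:F) ≠ 0 := h_ne hcw hw hw0 two_ne hk h14
      have htne0 : hval c s k t ≠ 0 := h_ne hcw hw hw0 two_ne hk ht4
      have hf1 : (1:F) ^ r * hval c s k ((1:F) ^ (8*s+2)) ≠ 0 := by
        rw [one_pow, one_pow, one_mul]; exact h1ne
      have hf2 : τ ^ r * hval c s k (τ ^ (8*s+2)) ≠ 0 := by
        rw [hτt]; exact mul_ne_zero (pow_ne_zero _ hτ0) htne0
      have hx2q : τ ^ (r*(8*s+3)) = τ ^ r * t ^ (k+1) := by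
        rw [show r*(8*s+3) = r + (8*s+2)*r from by ring, pow_add, pow_mul, hτt, htr]
      have H : (τ ^ r * hval c s k (τ ^ (8*s+2))) ^ (8*s+3) * ((1:F) ^ r * hval c s k ((1:F) ^ (8*s+2)))
             = ((1:F) ^ r * hval c s k ((1:F) ^ (8*s+2))) ^ (8*s+3) * (τ ^ r * hval c s k (τ ^ (8*s+2))) := by
        rw [hτt]
        simp only [one_pow, one_mul]
        apply mul_right_cancel₀ (show (w * t^(k+1)) * w ≠ 0 from
          mul_ne_zero (mul_ne_zero hw0 (pow_ne_zero _ ht0)) hw0)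
        have hL : (τ^r * hval c s k t) ^ (8*s+3) * hval c s k 1 * ((w * t^(k+1)) * w)
            = (τ^r * t^(k+1)) * hval c s k t * hval c s k 1 * w := by
          calc (τ^r * hval c s k t) ^ (8*s+3) * hval c s k 1 * ((w * t^(k+1)) * w)
              = (τ^r)^(8*s+3) * ((hval c s k t)^(8*s+3) * (w * t^(k+1))) * hval c s k 1 * w := by
                rw [mul_pow]; ring
            _ = (τ^r)^(8*s+3) * hval c s k t * hval c s k 1 * w := by rw [e2]
            _ = (τ^r * t^(k+1)) * hval c s k t * hval c s k 1 * w := by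
                rw [← pow_mul, hx2q]
        have hR : (hval c s k 1) ^ (8*s+3) * (τ^r * hval c s k t) * ((w * t^(k+1)) * w)
            = (τ^r * t^(k+1)) * hval c s k t * hval c s k 1 * w := by
          calc (hval c s k 1) ^ (8*s+3) * (τ^r * hval c s k t) * ((w * t^(k+1)) * w)
              = ((hval c s k 1)^(8*s+3) * w) * (τ^r * hval c s k t) * (w * t^(k+1)) := by
                ring
            _ = hval c s k 1 * (τ^r * hval c s k t) * (w * t^(k+1)) := by rw [e1]
            _ = (τ^r * t^(k+1)) * hval c s k t * hval c s k 1 * w := by ring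
        rw [hL, hR]
      have hkey := key hinj part1 hf1 hf2 H
      rw [hτt, one_pow] at hkey
      exact htne hkey
    exact ⟨Nat.Coprime.mul_right part1 part2, part3⟩
  · rintro ⟨h1, h2⟩
    have hr8 : Nat.Coprime r (8*s+2) := Nat.Coprime.coprime_dvd_right ⟨2*s+1, rfl⟩ h1
    have hrm : Nat.Coprime r (2*s+1) := Nat.Coprime.coprime_dvd_right (dvd_mul_left _ _) h1
    have hrodd : Odd r := by
      rcases Nat.even_or_odd r with he | ho
      · exfalso
        obtain ⟨t, ht⟩ := he
        have hdd : 2 ∣ Nat.gcd r (8*s+2) := Nat.dvd_gcd ⟨t, by omega⟩ ⟨4*s+1, by ring⟩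
        rw [hr8] at hdd; omega
      · exact ho
    have hrpos : r ≠ 0 := by
      rintro rfl
      rw [Nat.gcd_zero_left] at h1
      have h8 : 2 ≤ 8*s+2 := by omega
      have hm1 : 1 ≤ 2*s+1 := by omega
      have := Nat.mul_le_mul h8 hm1
      rw [h1] at this; omega
    have hgcd2' : Int.gcd ((r:ℤ) - ((k+1 : ℕ) : ℤ)) ((2*s+1 : ℕ) : ℤ) = 1 := by
      convert h2 using 2; push_cast; ring
    rw [← Finite.injective_iff_bijective]
    intro x1 x2 hfeq
    simp only at hfeq
    by_cases hx1 : x1 = 0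
    · subst hx1
      rw [zero_pow hrpos, zero_mul] at hfeq
      by_contra hx2
      have hx2' : x2 ≠ 0 := fun h => hx2 (by rw [h])
      exact (mul_ne_zero (pow_ne_zero _ hx2')
        (h_ne hcw hw hw0 two_ne hk (hy4all x2 hx2'))) hfeq.symm
    by_cases hx2 : x2 = 0
    · subst hx2
      rw [zero_pow hrpos, zero_mul] at hfeq
      exact absurd hfeq (mul_ne_zero (pow_ne_zero _ hx1)
        (h_ne hcw hw hw0 two_ne hk (hy4all x1 hx1)))
    set y1 := x1 ^ (8*s+2) with hy1d
    set y2 := x2 ^ (8*s+2) with hy2d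
    have hy14 : y1 ^ (4*(2*s+1)) = 1 := hy4all x1 hx1
    have hy24 : y2 ^ (4*(2*s+1)) = 1 := hy4all x2 hx2
    have hy10 : y1 ≠ 0 := by rw [hy1d]; exact pow_ne_zero _ hx1
    have hy20 : y2 ≠ 0 := by rw [hy2d]; exact pow_ne_zero _ hx2
    have h1ne : hval c s k y1 ≠ 0 := h_ne hcw hw hw0 two_ne hk hy14
    have h2ne : hval c s k y2 ≠ 0 := h_ne hcw hw hw0 two_ne hk hy24
    have hpw1 : (x1 ^ r) ^ (8*s+3) = x1 ^ r * y1 ^ r := by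
      rw [hy1d, ← pow_mul, ← pow_mul, ← pow_add]; congr 1; ring
    have hpw2 : (x2 ^ r) ^ (8*s+3) = x2 ^ r * y2 ^ r := by
      rw [hy2d, ← pow_mul, ← pow_mul, ← pow_add]; congr 1; ring
    have master : ∀ M1 M2 σ1 σ2 : F,
        (hval c s k y1) ^ (8*s+3) * M1 = σ1 * hval c s k y1 →
        (hval c s k y2) ^ (8*s+3) * M2 = σ2 * hval c s k y2 →
        σ1 * y1 ^ r * M2 = σ2 * y2 ^ r * M1 := by
      intro M1 M2 σ1 σ2 e1 e2
      have hEne : x1 ^ r * hval c s k y1 ≠ 0 := mul_ne_zero (pow_ne_zero _ hx1) h1ne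
      apply mul_left_cancel₀ hEne
      calc x1 ^ r * hval c s k y1 * (σ1 * y1 ^ r * M2)
          = (x1 ^ r * y1 ^ r) * (σ1 * hval c s k y1) * M2 := by ring
        _ = (x1 ^ r * y1 ^ r) * ((hval c s k y1) ^ (8*s+3) * M1) * M2 := by rw [e1]
        _ = (x1 ^ r) ^ (8*s+3) * (hval c s k y1) ^ (8*s+3) * (M1 * M2) := by
            rw [hpw1]; ring
        _ = (x1 ^ r * hval c s k y1) ^ (8*s+3) * (M1 * M2) := by rw [mul_pow]
        _ = (x2 ^ r * hval c s k y2) ^ (8*s+3) * (M1 * M2) := by rw [hfeq]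
        _ = (x2 ^ r) ^ (8*s+3) * (hval c s k y2) ^ (8*s+3) * (M1 * M2) := by rw [mul_pow]
        _ = (x2 ^ r * y2 ^ r) * ((hval c s k y2) ^ (8*s+3) * M2) * M1 := by
            rw [hpw2]; ring
        _ = (x2 ^ r * y2 ^ r) * (σ2 * hval c s k y2) * M1 := by rw [e2]
        _ = (x2 ^ r * hval c s k y2) * (σ2 * y2 ^ r * M1) := by ring
        _ = x1 ^ r * hval c s k y1 * (σ2 * y2 ^ r * M1) := by rw [hfeq]
    have final : y1 = y2 → x1 = x2 := by
      intro hyy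
      have hfeq' := hfeq
      rw [← hyy] at hfeq'
      have hxr : x1 ^ r = x2 ^ r := mul_right_cancel₀ h1ne hfeq'
      have hx8 : x1 ^ (8*s+2) = x2 ^ (8*s+2) := by rw [← hy1d, ← hy2d, hyy]
      refine eq_of_cross hx1 hx2 (a := r) (b := 0) (M := 8*s+2) (by simpa using hxr) hx8 ?_
      simp only [Nat.cast_zero, sub_zero, Int.gcd_natCast_natCast]; exact hr8
    have hone : ∀ m : ℕ, (1:F) ^ m = 1 := fun m => one_pow m
    rcases tri hy14 with hA1 | hB1 | hC1 <;> rcases tri hy24 with hA2 | hB2 | hC2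
    · -- AA
      have e1 := relA (k := k) hcw hwq frob htwo (hyq_of hy14) (valA (k := k) hy14 hA1)
      have e2 := relA (k := k) hcw hwq frob htwo (hyq_of hy24) (valA (k := k) hy24 hA2)
      have st := master _ _ 1 1 (by rw [one_mul]; exact e1) (by rw [one_mul]; exact e2)
      have hcross : y1 ^ r * y2 ^ (k+1) = y2 ^ r * y1 ^ (k+1) := by
        apply mul_left_cancel₀ hw0; linear_combination st
      exact final (eq_of_cross hy10 hy20 hcross (by rw [hA1, hA2]) hgcd2')
    · -- AB : contradiction
      have e1 := relA (k := k) hcw hwq frob htwo (hyq_of hy14) (valA (k := k) hy14 hA1)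
      have e2 := relB (k := k) hcw hwq frob htwo (hyq_of hy24) (valB (k := k) hy24 hB2)
      have st := master _ _ 1 (-1) (by rw [one_mul]; exact e1)
        (by rw [neg_one_mul]; exact e2)
      exfalso
      have hst := congrArg (fun z : F => z ^ (2*s+1)) st
      simp only [mul_pow] at hst
      rw [pow_right_comm y1 r, pow_right_comm y2 (k+1), pow_right_comm y2 r,
        pow_right_comm y1 (k+1), hA1, hB2, hw, hmodd.neg_one_pow, one_pow, one_pow,
        one_pow, hkodd.neg_one_pow, hrodd.neg_one_pow] at hst
      apply two_ne; linear_combination -hst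
    · -- AC : contradiction
      have e1 := relA (k := k) hcw hwq frob htwo (hyq_of hy14) (valA (k := k) hy14 hA1)
      have e2 := relC (k := k) hcw hwq htwo (valC (k := k) hy24 hC2)
      have st := master _ _ 1 1 (by rw [one_mul]; exact e1) (by rw [one_mul]; exact e2)
      exfalso
      have hy1two : y1 ^ (2*(2*s+1)) = 1 := by
        rw [show 2*(2*s+1) = (2*s+1)*2 by ring, pow_mul, hA1, one_pow]
      have hw2 : w ^ (2*(2*s+1)) = 1 := by
        rw [show 2*(2*s+1) = (2*s+1)*2 by ring, pow_mul, hw, one_pow]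
      have hst := congrArg (fun z : F => z ^ (2*(2*s+1))) st
      simp only [mul_pow] at hst
      rw [pow_right_comm y1 r, pow_right_comm y2 r, pow_right_comm y1 (k+1),
        hy1two, hC2, hw2, hrodd.neg_one_pow] at hst
      simp only [one_pow, one_mul, mul_one] at hst
      apply two_ne; linear_combination hst
    · -- BA : contradiction
      have e1 := relB (k := k) hcw hwq frob htwo (hyq_of hy14) (valB (k := k) hy14 hB1)
      have e2 := relA (k := k) hcw hwq frob htwo (hyq_of hy24) (valA (k := k) hy24 hA2)
      have st := master _ _ (-1) 1 (by rw [neg_one_mul]; exact e1)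
        (by rw [one_mul]; exact e2)
      exfalso
      have hst := congrArg (fun z : F => z ^ (2*s+1)) st
      simp only [mul_pow] at hst
      rw [pow_right_comm y1 r, pow_right_comm y2 (k+1), pow_right_comm y2 r,
        pow_right_comm y1 (k+1), hB1, hA2, hw, hmodd.neg_one_pow, one_pow, one_pow,
        one_pow, hkodd.neg_one_pow, hrodd.neg_one_pow] at hst
      apply two_ne; linear_combination hst
    · -- BB
      have e1 := relB (k := k) hcw hwq frob htwo (hyq_of hy14) (valB (k := k) hy14 hB1)
      have e2 := relB (k := k) hcw hwq frob htwo (hyq_of hy24) (valB (k := k) hy24 hB2)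
      have st := master _ _ (-1) (-1) (by rw [neg_one_mul]; exact e1)
        (by rw [neg_one_mul]; exact e2)
      have hcross : y1 ^ r * y2 ^ (k+1) = y2 ^ r * y1 ^ (k+1) := by
        apply mul_left_cancel₀ hw0; linear_combination -st
      exact final (eq_of_cross hy10 hy20 hcross (by rw [hB1, hB2]) hgcd2')
    · -- BC : contradiction
      have e1 := relB (k := k) hcw hwq frob htwo (hyq_of hy14) (valB (k := k) hy14 hB1)
      have e2 := relC (k := k) hcw hwq htwo (valC (k := k) hy24 hC2)
      have st := master _ _ (-1) 1 (by rw [neg_one_mul]; exact e1)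
        (by rw [one_mul]; exact e2)
      exfalso
      have hy1two : y1 ^ (2*(2*s+1)) = 1 := by
        rw [show 2*(2*s+1) = (2*s+1)*2 by ring, pow_mul, hB1, neg_one_sq]
      have hw2 : w ^ (2*(2*s+1)) = 1 := by
        rw [show 2*(2*s+1) = (2*s+1)*2 by ring, pow_mul, hw, one_pow]
      have heven : Even (2*(2*s+1)) := ⟨2*s+1, by ring⟩
      have hst := congrArg (fun z : F => z ^ (2*(2*s+1))) st
      simp only [mul_pow] at hst
      rw [pow_right_comm y1 r, pow_right_comm y2 r, pow_right_comm y1 (k+1),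
        hy1two, hC2, hw2, heven.neg_one_pow, hrodd.neg_one_pow] at hst
      simp only [one_pow, one_mul, mul_one] at hst
      apply two_ne; linear_combination hst
    · -- CA : contradiction
      have e1 := relC (k := k) hcw hwq htwo (valC (k := k) hy14 hC1)
      have e2 := relA (k := k) hcw hwq frob htwo (hyq_of hy24) (valA (k := k) hy24 hA2)
      have st := master _ _ 1 1 (by rw [one_mul]; exact e1) (by rw [one_mul]; exact e2)
      exfalso
      have hy2two : y2 ^ (2*(2*s+1)) = 1 := by
        rw [show 2*(2*s+1) = (2*s+1)*2 by ring, pow_mul, hA2, one_pow]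
      have hw2 : w ^ (2*(2*s+1)) = 1 := by
        rw [show 2*(2*s+1) = (2*s+1)*2 by ring, pow_mul, hw, one_pow]
      have hst := congrArg (fun z : F => z ^ (2*(2*s+1))) st
      simp only [mul_pow] at hst
      rw [pow_right_comm y1 r, pow_right_comm y2 r, pow_right_comm y2 (k+1),
        hC1, hy2two, hw2, hrodd.neg_one_pow] at hst
      simp only [one_pow, one_mul, mul_one] at hst
      apply two_ne; linear_combination -hst
    · -- CB : contradiction
      have e1 := relC (k := k) hcw hwq htwo (valC (k := k) hy14 hC1)
      have e2 := relB (k := k) hcw hwq frob htwo (hyq_of hy24) (valB (k := k) hy24 hB2)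
      have st := master _ _ 1 (-1) (by rw [one_mul]; exact e1)
        (by rw [neg_one_mul]; exact e2)
      exfalso
      have hy2two : y2 ^ (2*(2*s+1)) = 1 := by
        rw [show 2*(2*s+1) = (2*s+1)*2 by ring, pow_mul, hB2, neg_one_sq]
      have hw2 : w ^ (2*(2*s+1)) = 1 := by
        rw [show 2*(2*s+1) = (2*s+1)*2 by ring, pow_mul, hw, one_pow]
      have heven : Even (2*(2*s+1)) := ⟨2*s+1, by ring⟩
      have hst := congrArg (fun z : F => z ^ (2*(2*s+1))) st
      simp only [mul_pow] at hst
      rw [pow_right_comm y1 r, pow_right_comm y2 r, pow_right_comm y2 (k+1),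
        hC1, hy2two, hw2, heven.neg_one_pow, hrodd.neg_one_pow] at hst
      simp only [one_pow, one_mul, mul_one] at hst
      apply two_ne; linear_combination -hst
    · -- CC
      have e1 := relC (k := k) hcw hwq htwo (valC (k := k) hy14 hC1)
      have e2 := relC (k := k) hcw hwq htwo (valC (k := k) hy24 hC2)
      have st := master _ _ 1 1 (by rw [one_mul]; exact e1) (by rw [one_mul]; exact e2)
      have hcross : y1 ^ r * y2 ^ 0 = y2 ^ r * y1 ^ 0 := by
        simp only [pow_zero, mul_one]
        apply mul_right_cancel₀ (mul_ne_zero hw0 hw0)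
        linear_combination st
      have hr2m : Nat.Coprime r (2*(2*s+1)) := by
        apply Nat.Coprime.mul_right _ hrm
        rcases hrodd with ⟨t, ht⟩
        simp [Nat.Coprime, ht, Nat.gcd_comm]
      have hyy : y1 = y2 := by
        refine eq_of_cross hy10 hy20 hcross (by rw [hC1, hC2]) ?_
        simp only [Nat.cast_zero, sub_zero, Int.gcd_natCast_natCast]; exact hr2m
      exact final hyy

end Main

theorem stmt11 (p pn q : ℕ) (hp : p.Prime) (hpn : 0 < pn) (hq : q = p ^ pn)
    (hq8 : q % 8 = 3)
    (F : Type*) [Field F] [Fintype F] (hF : Fintype.card F = q ^ 2)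
    (c : F) (hc : (c / 2) ^ ((q + 1) / 4) = 1)
    (k : ℕ) (hk : Even k) (r : ℕ) :
    Function.Bijective (fun x : F => x ^ r *
      (c + (x ^ (q - 1)) ^ ((q + 5) / 4 + k)
         + (x ^ (q - 1)) ^ (q * ((q + 5) / 4) + k + 2))) ↔
      (Nat.gcd r ((q ^ 2 - 1) / 4) = 1 ∧
        Int.gcd ((r : ℤ) - k - 1) (((q + 1) / 4 : ℕ) : ℤ) = 1) := by
  obtain ⟨s, hs⟩ : ∃ s, q = 8*s+3 := ⟨q/8, by omega⟩
  have e3 : q * ((q+5)/4) + k + 2 = (8*s+3)*(2*s+2) + k + 2 := by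
    rw [show (q+5)/4 = 2*s+2 from by omega, hs]
  have e1 : (q+5)/4 = 2*s+2 := by omega
  have e2 : q - 1 = 8*s+2 := by omega
  have e5 : (q+1)/4 = 2*s+1 := by omega
  have e4 : (q^2 - 1)/4 = (8*s+2)*(2*s+1) := by
    have hq2 : q^2 = 4*((8*s+2)*(2*s+1)) + 1 := by rw [hs]; ring
    obtain ⟨B, hB⟩ : ∃ B, (8*s+2)*(2*s+1) = B := ⟨_, rfl⟩
    rw [hB] at hq2 ⊢
    omega
  rw [e3, e1, e2, e4, e5]
  rw [e5] at hc
  rw [hs] at hF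
  exact main p pn s hp (by rw [← hq]; exact hs) hpn hF c hc k hk r
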